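/- A word w is a conjugate of u^p (the p-th power of u) if and only if, writing BWT(u) = b_1 b_2 ... b_{|u|}, one has BWT(w) = b_1^p b_2^p ... b_{|u|}^p. -/

import Mathlib

namespace BWTpaper

variable {A : Type*}

/-- Lexicographic `≤` (as a `Bool`) on lists, induced by a strict order `lt` on letters. -/
def lexLe (lt : A → A → Bool) : List A → List A → Bool
  | [], _ => true
  | _ :: _, [] => false
  | x :: xs, y :: ys => if lt x y then true else if lt y x then false else lexLe lt xs ys

/-- The list of all rotations (conjugates, with multiplicity) of a word. -/
def rotations (w : List A) : List (List A) := (List.range w.length).map (fun i => w.rotate i)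

/-- Burrows-Wheeler transform with respect to a strict order `lt` on letters. -/
def bwtBy (lt : A → A → Bool) (w : List A) : List A :=
  ((rotations w).mergeSort (lexLe lt)).filterMap List.getLast?

def stdLt [LinearOrder A] : A → A → Bool := fun x y => decide (x < y)

/-- Burrows-Wheeler transform w.r.t. the order of a `LinearOrder` alphabet. -/
def bwt [LinearOrder A] (w : List A) : List A := bwtBy stdLt w

def Conjugate (u v : List A) : Prop := ∃ x y : List A, u = x ++ y ∧ v = y ++ x

/-- `u^p`. -/
def wordPow (u : List A) (p : ℕ) : List A := (List.replicate p u).flatten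

def Primitive (w : List A) : Prop := w ≠ [] ∧ ∀ (u : List A) (k : ℕ), w = wordPow u k → k = 1

/-- The letters of the alphabet, sorted increasingly w.r.t. `lt`. -/
noncomputable def sortedAlphabet [Fintype A] (lt : A → A → Bool) : List A :=
  Finset.univ.toList.mergeSort (fun x y => !(lt y x))

/-- `w` is `π`-clustering w.r.t. the letter order `lt`:
its BWT is `π(a₁)^{k₁} ⋯ π(a_d)^{k_d}` where `a₁ < ⋯ < a_d` and `k_i = |w|_{π(a_i)}`. -/
def IsClusteringBy [Fintype A] [DecidableEq A] (lt : A → A → Bool) (π : Equiv.Perm A)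
    (w : List A) : Prop :=
  bwtBy lt w = (sortedAlphabet lt).flatMap (fun c => List.replicate (w.count (π c)) (π c))

def IsClustering [Fintype A] [LinearOrder A] (π : Equiv.Perm A) (w : List A) : Prop :=
  IsClusteringBy stdLt π w

/-- The prefix of length `n` of the periodic infinite word `u^ω`. -/
def omegaTake (u : List A) (n : ℕ) : List A := ((List.replicate n u).flatten).take n

/-- The ω-order: `u ≤_ω v` iff `u^ω ≤ v^ω` lexicographically (decided on the first
`|u| + |v|` letters, which suffices by Fine and Wilf). -/
def omegaLe (lt : A → A → Bool) (u v : List A) : Bool :=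
  lexLe lt (omegaTake u (u.length + v.length)) (omegaTake v (u.length + v.length))

/-- Extended Burrows-Wheeler transform of a multiset (list) of words. -/
def ebwtBy (lt : A → A → Bool) (W : List (List A)) : List A :=
  ((W.flatMap rotations).mergeSort (omegaLe lt)).filterMap List.getLast?

/-- A multiset of words is `π`-clustering if its eBWT consists of the blocks
`π(a₁)^{k₁} ⋯ π(a_d)^{k_d}` with `k_i` the total number of occurrences of `π(a_i)`. -/
def IsClusteringMultisetBy [Fintype A] [DecidableEq A] (lt : A → A → Bool)
    (π : Equiv.Perm A) (W : List (List A)) : Prop :=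
  ebwtBy lt W =
    (sortedAlphabet lt).flatMap
      (fun c => List.replicate ((W.map (fun w => w.count (π c))).sum) (π c))

/-- The morphism `α_{a,b} : a ↦ ab`, `c ↦ c` for `c ≠ a`. -/
def alphaM [DecidableEq A] (a b : A) (w : List A) : List A :=
  w.flatMap (fun c => if c = a then [a, b] else [c])

/-- The morphism `α̃_{a,b} : a ↦ ba`, `c ↦ c` for `c ≠ a`. -/
def tildeM [DecidableEq A] (a b : A) (w : List A) : List A :=
  w.flatMap (fun c => if c = a then [b, a] else [c])


section Aux
set_option linter.unusedSectionVars false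

variable [LinearOrder A]

lemma lexLe_refl (l : List A) : lexLe stdLt l l = true := by
  induction l with
  | nil => rfl
  | cons x xs ih => simp [lexLe, stdLt, ih]

lemma lexLe_total (u v : List A) : lexLe stdLt u v = true ∨ lexLe stdLt v u = true := by
  induction u generalizing v with
  | nil => left; rfl
  | cons x xs ih =>
    cases v with
    | nil => right; rfl
    | cons y ys =>
      rcases lt_trichotomy x y with h | h | h
      · left; simp [lexLe, stdLt, h]
      · subst h
        rcases ih ys with h2 | h2
        · left; simp [lexLe, stdLt, h2]
        · right; simp [lexLe, stdLt, h2]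
      · right; simp [lexLe, stdLt, h]

lemma lexLe_trans : ∀ (a b c : List A), lexLe stdLt a b = true → lexLe stdLt b c = true →
    lexLe stdLt a c = true
  | [], _, _, _, _ => rfl
  | _ :: _, [], _, h, _ => by simp [lexLe] at h
  | _ :: _, _ :: _, [], _, h => by simp [lexLe] at h
  | x :: xs, y :: ys, z :: zs, h1, h2 => by
    simp only [lexLe, stdLt] at h1 h2 ⊢
    rcases lt_trichotomy x y with hxy | hxy | hxy
    · rcases lt_trichotomy y z with hyz | hyz | hyz
      · simp [hxy.trans hyz]
      · subst hyz; simp [hxy]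
      · simp [not_lt_of_gt hyz, hyz] at h2
    · subst hxy
      rcases lt_trichotomy x z with hxz | hxz | hxz
      · simp [hxz]
      · subst hxz
        simp only [lt_irrefl, decide_false, Bool.false_eq_true, if_false] at h1 h2 ⊢
        exact lexLe_trans xs ys zs h1 h2
      · simp [not_lt_of_gt hxz, hxz] at h2
    · simp [not_lt_of_gt hxy, hxy] at h1

lemma lexLe_antisymm : ∀ {u v : List A}, lexLe stdLt u v = true → lexLe stdLt v u = true → u = v
  | [], [], _, _ => rfl
  | [], _ :: _, _, h2 => by simp [lexLe] at h2
  | _ :: _, [], h1, _ => by simp [lexLe] at h1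
  | x :: xs, y :: ys, h1, h2 => by
    simp only [lexLe, stdLt, decide_eq_true_eq] at h1 h2
    by_cases hxy : x < y
    · simp [hxy, not_lt_of_gt hxy] at h2
    · by_cases hyx : y < x
      · simp [hyx, not_lt_of_gt hyx] at h1
      · have hxy' : x = y := le_antisymm (not_lt.mp hyx) (not_lt.mp hxy)
        subst hxy'
        simp only [hxy, lt_irrefl, if_false, if_neg] at h1 h2
        rw [lexLe_antisymm h1 h2]

lemma lexLe_take (k : ℕ) : ∀ {u v : List A}, lexLe stdLt u v = true →
    lexLe stdLt (u.take k) (v.take k) = true := by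
  induction k with
  | zero => intro u v _; simp [lexLe]
  | succ k ih =>
    intro u v h
    match u, v with
    | [], _ => simp [lexLe]
    | _ :: _, [] => simp [lexLe] at h
    | x :: xs, y :: ys =>
      simp only [List.take_succ_cons, lexLe, stdLt] at h ⊢
      by_cases hxy : x < y
      · simp [hxy]
      · by_cases hyx : y < x
        · simp [hxy, hyx] at h
        · simp only [hxy, hyx, decide_false, Bool.false_eq_true, if_false] at h ⊢
          exact ih h

lemma lexLe_append_same : ∀ (u a b : List A),
    lexLe stdLt (u ++ a) (u ++ b) = lexLe stdLt a b
  | [], _, _ => rfl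
  | x :: xs, a, b => by
    simp only [List.cons_append, lexLe, stdLt, lt_irrefl, decide_false, if_false]
    exact lexLe_append_same xs a b

lemma lexLe_append_left : ∀ {u v : List A}, u ≠ v → u.length = v.length → ∀ (a b : List A),
    lexLe stdLt (u ++ a) (v ++ b) = lexLe stdLt u v
  | [], [], h, _, _, _ => absurd rfl h
  | [], _ :: _, _, hl, _, _ => by simp at hl
  | _ :: _, [], _, hl, _, _ => by simp at hl
  | x :: xs, y :: ys, h, hl, a, b => by
    simp only [List.cons_append, lexLe, stdLt]
    by_cases hxy : x < y
    · simp [hxy]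
    · by_cases hyx : y < x
      · simp [hxy, hyx]
      · have hxy' : x = y := le_antisymm (not_lt.mp hyx) (not_lt.mp hxy)
        subst hxy'
        have hne : xs ≠ ys := fun he => h (by rw [he])
        simp only [lt_irrefl, decide_false, if_false]
        exact lexLe_append_left hne (by simpa using hl) a b


lemma lexLe_total' (u v : List A) : (lexLe stdLt u v || lexLe stdLt v u) = true := by
  rcases lexLe_total u v with h | h <;> simp [h]

lemma eq_of_perm_of_lexSorted {l₁ l₂ : List (List A)} (hp : l₁.Perm l₂)
    (h1 : l₁.Pairwise (fun a b => lexLe stdLt a b = true))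
    (h2 : l₂.Pairwise (fun a b => lexLe stdLt a b = true)) : l₁ = l₂ := by
  haveI : IsAntisymm (List A) (fun a b => lexLe stdLt a b = true) :=
    ⟨fun _ _ => lexLe_antisymm⟩
  exact List.Perm.eq_of_pairwise (fun _ _ _ _ => lexLe_antisymm) h1 h2 hp

lemma sorted_mergeSort_lex (l : List (List A)) :
    (l.mergeSort (lexLe stdLt)).Pairwise (fun a b => lexLe stdLt a b = true) :=
  List.pairwise_mergeSort (fun _ _ _ => lexLe_trans _ _ _) lexLe_total' l

lemma wordPow_succ (u : List A) (p : ℕ) : wordPow u (p + 1) = u ++ wordPow u p := by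
  simp [wordPow, List.replicate_succ]

lemma wordPow_succ' (u : List A) (p : ℕ) : wordPow u (p + 1) = wordPow u p ++ u := by
  simp [wordPow, List.replicate_succ', List.flatten_append]

lemma length_wordPow (u : List A) (p : ℕ) : (wordPow u p).length = p * u.length := by
  induction p with
  | zero => simp [wordPow]
  | succ p ih => rw [wordPow_succ, List.length_append, ih]; ring

lemma rotate_wordPow_length (u : List A) (p : ℕ) (hp : 1 ≤ p) :
    (wordPow u p).rotate u.length = wordPow u p := by
  obtain ⟨q, rfl⟩ : ∃ q, p = q + 1 := ⟨p - 1, by omega⟩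
  rw [wordPow_succ]
  rw [List.rotate_eq_drop_append_take (by simp), List.drop_left, List.take_left]
  exact (wordPow_succ' u q).symm

lemma rotate_wordPow_add (u : List A) (p : ℕ) (hp : 1 ≤ p) (i : ℕ) :
    (wordPow u p).rotate (i + u.length) = (wordPow u p).rotate i := by
  rw [Nat.add_comm, ← List.rotate_rotate, rotate_wordPow_length u p hp]

lemma rotate_wordPow_mul_add (u : List A) (p : ℕ) (hp : 1 ≤ p) (q i : ℕ) :
    (wordPow u p).rotate (q * u.length + i) = (wordPow u p).rotate i := by
  induction q with
  | zero => simp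
  | succ q ih =>
    have he : (q + 1) * u.length + i = (q * u.length + i) + u.length := by ring
    rw [he, rotate_wordPow_add u p hp, ih]

lemma pow_shift (t d : List A) : ∀ q, d ++ wordPow (t ++ d) q ++ t = wordPow (d ++ t) (q + 1)
  | 0 => by simp [wordPow]
  | q + 1 => by
    rw [wordPow_succ (t ++ d) q, wordPow_succ (d ++ t) (q + 1)]
    have := pow_shift t d q
    simp only [List.append_assoc] at this ⊢
    rw [← this]

lemma rotate_wordPow_small (u : List A) (p : ℕ) (hp : 1 ≤ p) (r : ℕ) (hr : r ≤ u.length) :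
    (wordPow u p).rotate r = wordPow (u.rotate r) p := by
  obtain ⟨q, rfl⟩ : ∃ q, p = q + 1 := ⟨p - 1, by omega⟩
  rw [List.rotate_eq_drop_append_take (by rw [length_wordPow]; nlinarith),
      List.rotate_eq_drop_append_take hr, wordPow_succ,
      List.drop_append_of_le_length hr, List.take_append_of_le_length hr]
  have := pow_shift (u.take r) (u.drop r) q
  rw [List.take_append_drop] at this
  rw [← this]

lemma length_rotations (w : List A) : (rotations w).length = w.length := by
  simp [rotations]

lemma length_of_mem_rotations {w r : List A} (h : r ∈ rotations w) : r.length = w.length := by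
  simp only [rotations, List.mem_map, List.mem_range] at h
  obtain ⟨i, _, rfl⟩ := h
  exact List.length_rotate w i

lemma exists_of_mem_rotations {w r : List A} (h : r ∈ rotations w) : ∃ i, r = w.rotate i := by
  simp only [rotations, List.mem_map, List.mem_range] at h
  obtain ⟨i, _, rfl⟩ := h
  exact ⟨i, rfl⟩

lemma self_mem_rotations (w : List A) (hw : w ≠ []) : w ∈ rotations w := by
  simp only [rotations, List.mem_map, List.mem_range]
  exact ⟨0, List.length_pos_iff.mpr hw, (List.rotate_zero w)⟩

lemma rotations_rotate_one (w : List A) : (rotations (w.rotate 1)).Perm (rotations w) := by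
  have hA : (List.range (w.length + 1)).map (fun i => w.rotate i)
      = rotations w ++ [w] := by
    rw [List.range_succ, List.map_append]
    simp [rotations, List.rotate_length]
  have hB : (List.range (w.length + 1)).map (fun i => w.rotate i)
      = w :: rotations (w.rotate 1) := by
    rw [List.range_succ_eq_map, List.map_cons, List.map_map]
    congr 1
    · exact List.rotate_zero w
    · simp only [rotations, List.length_rotate, List.map_map]
      apply List.map_congr_left
      intro i _
      simp only [Function.comp, List.rotate_rotate]
      rw [Nat.add_comm]
  have := hA.symm.trans hB
  have hperm : (w :: rotations (w.rotate 1)).Perm (w :: rotations w) := by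
    rw [← this]; exact List.perm_append_singleton w (rotations w)
  exact (List.perm_cons w).mp hperm

lemma rotations_rotate (w : List A) (j : ℕ) : (rotations (w.rotate j)).Perm (rotations w) := by
  induction j with
  | zero => rw [List.rotate_zero]
  | succ j ih =>
    have : w.rotate (j + 1) = (w.rotate j).rotate 1 := by rw [List.rotate_rotate]
    rw [this]
    exact (rotations_rotate_one (w.rotate j)).trans ih

lemma conjugate_iff_rotate {w v : List A} : Conjugate w v ↔ ∃ i, v = w.rotate i := by
  constructor
  · rintro ⟨x, y, rfl, rfl⟩
    refine ⟨x.length, ?_⟩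
    rw [List.rotate_eq_drop_append_take (by simp), List.drop_left, List.take_left]
  · rintro ⟨i, rfl⟩
    by_cases hw : w = []
    · subst hw; exact ⟨[], [], rfl, by simp⟩
    · have hn : 0 < w.length := List.length_pos_iff.mpr hw
      refine ⟨w.take (i % w.length), w.drop (i % w.length), (List.take_append_drop _ w).symm, ?_⟩
      rw [← List.rotate_mod, List.rotate_eq_drop_append_take (le_of_lt (Nat.mod_lt i hn))]

lemma filterMap_getLast?_eq_map (a0 : A) :
    ∀ {M : List (List A)}, (∀ r ∈ M, r ≠ []) →
      M.filterMap List.getLast? = M.map (fun r => r.getLast?.getD a0)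
  | [], _ => rfl
  | r :: M, h => by
    have hr : r ≠ [] := h r (by simp)
    have hc : r.getLast? = some (r.getLast hr) := List.getLast?_eq_getLast hr
    rw [List.filterMap_cons, List.map_cons, hc,
      filterMap_getLast?_eq_map a0 (fun x hx => h x (by simp [hx]))]
    rfl

lemma bwt_eq_map (w : List A) (hw : w ≠ []) (a0 : A) :
    bwt w = ((rotations w).mergeSort (lexLe stdLt)).map (fun r => r.getLast?.getD a0) := by
  unfold bwt bwtBy
  apply filterMap_getLast?_eq_map
  intro r hr
  rw [List.mem_mergeSort] at hr
  have := length_of_mem_rotations hr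
  intro hnil
  rw [hnil] at this
  exact hw (List.eq_nil_of_length_eq_zero this.symm)

lemma length_bwt (w : List A) : (bwt w).length = w.length := by
  by_cases hw : w = []
  · subst hw; simp [bwt, bwtBy, rotations]
  · have a0 : A := w.head hw
    rw [bwt_eq_map w hw a0, List.length_map, List.length_mergeSort, length_rotations]

lemma bwt_eq_of_rotations_perm {w w' : List A} (h : (rotations w).Perm (rotations w')) :
    bwt w = bwt w' := by
  unfold bwt bwtBy
  congr 1
  exact eq_of_perm_of_lexSorted
    ((List.mergeSort_perm _ _).trans (h.trans (List.mergeSort_perm _ _).symm))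
    (sorted_mergeSort_lex _) (sorted_mergeSort_lex _)

lemma flatMap_append_perm {α β : Type*} (l : List α) (g h : α → List β) :
    (l.flatMap (fun r => g r ++ h r)).Perm (l.flatMap g ++ l.flatMap h) := by
  induction l with
  | nil => simp
  | cons a l ih =>
    simp only [List.flatMap_cons]
    refine (List.Perm.append_left _ ih).trans ?_
    rw [List.append_assoc, List.append_assoc]
    apply List.Perm.append_left
    rw [← List.append_assoc]
    exact ((List.perm_append_comm).append_right _).trans
      (List.Perm.of_eq (List.append_assoc _ _ _))

lemma flatMap_singleton_map {α β : Type*} (l : List α) (f : α → β) :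
    (l.flatMap fun r => [f r]) = l.map f := by
  induction l with
  | nil => rfl
  | cons a l ih => simp [List.flatMap_cons, ih]

lemma lexLe_wordPow {r r' : List A} (hl : r.length = r'.length) (p : ℕ) (hp : 1 ≤ p)
    (h : lexLe stdLt r r' = true) : lexLe stdLt (wordPow r p) (wordPow r' p) = true := by
  by_cases he : r = r'
  · subst he; exact lexLe_refl _
  · obtain ⟨q, rfl⟩ : ∃ q, p = q + 1 := ⟨p - 1, by omega⟩
    rw [wordPow_succ, wordPow_succ, lexLe_append_left he hl]
    exact h

lemma rotations_wordPow_aux (u : List A) (p : ℕ) (hp : 1 ≤ p) (q : ℕ) :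
    (((List.range (q * u.length)).map (fun i => (wordPow u p).rotate i)).Perm
      ((rotations u).flatMap fun r => List.replicate q (wordPow r p))) := by
  induction q with
  | zero =>
    simp [List.flatMap_def, List.map_const']
  | succ q ih =>
    have he : (q + 1) * u.length = q * u.length + u.length := by ring
    rw [he, List.range_add, List.map_append, List.map_map]
    have h2 : (List.range u.length).map ((fun i => (wordPow u p).rotate i) ∘
        (fun x => q * u.length + x)) = (rotations u).map (fun r => wordPow r p) := by
      rw [rotations, List.map_map]
      apply List.map_congr_left
      intro i hi
      rw [List.mem_range] at hi
      simp only [Function.comp]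
      rw [rotate_wordPow_mul_add u p hp, rotate_wordPow_small u p hp i (le_of_lt hi)]
    rw [h2]
    have h3 : ((rotations u).flatMap fun r => List.replicate (q + 1) (wordPow r p)).Perm
        (((rotations u).flatMap fun r => List.replicate q (wordPow r p)) ++
          ((rotations u).flatMap fun r => [wordPow r p])) := by
      have : (fun (r : List A) => List.replicate (q + 1) (wordPow r p))
          = fun r => List.replicate q (wordPow r p) ++ [wordPow r p] := by
        funext r; rw [List.replicate_succ']
      rw [this]
      exact flatMap_append_perm _ _ _
    refine List.Perm.trans ?_ h3.symm
    rw [flatMap_singleton_map]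
    exact ih.append (List.Perm.refl _)

lemma rotations_wordPow_perm (u : List A) (p : ℕ) (hp : 1 ≤ p) :
    (rotations (wordPow u p)).Perm
      ((rotations u).flatMap fun r => List.replicate p (wordPow r p)) := by
  have : rotations (wordPow u p)
      = (List.range (p * u.length)).map (fun i => (wordPow u p).rotate i) := by
    rw [rotations, length_wordPow]
  rw [this]
  exact rotations_wordPow_aux u p hp p

lemma sorted_flatMap_pow (u : List A) (p : ℕ) (hp : 1 ≤ p) :
    (((rotations u).mergeSort (lexLe stdLt)).flatMap
      (fun r => List.replicate p (wordPow r p))).Pairwise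
      (fun a b => lexLe stdLt a b = true) := by
  rw [List.pairwise_flatMap]
  constructor
  · intro r _
    rw [List.pairwise_replicate]
    right; exact lexLe_refl _
  · have hs := sorted_mergeSort_lex (rotations u)
    refine hs.imp_of_mem ?_
    intro a b ha hb hab x hx y hy
    rw [List.eq_of_mem_replicate hx, List.eq_of_mem_replicate hy]
    have hla := length_of_mem_rotations (List.mem_mergeSort.mp ha)
    have hlb := length_of_mem_rotations (List.mem_mergeSort.mp hb)
    exact lexLe_wordPow (hla.trans hlb.symm) p hp hab

lemma mergeSort_rotations_wordPow (u : List A) (p : ℕ) (hp : 1 ≤ p) :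
    (rotations (wordPow u p)).mergeSort (lexLe stdLt)
      = ((rotations u).mergeSort (lexLe stdLt)).flatMap
        (fun r => List.replicate p (wordPow r p)) := by
  apply eq_of_perm_of_lexSorted
  · refine (List.mergeSort_perm _ _).trans ?_
    refine (rotations_wordPow_perm u p hp).trans ?_
    exact (List.mergeSort_perm (rotations u) (lexLe stdLt)).symm.flatMap_right _
  · exact sorted_mergeSort_lex _
  · exact sorted_flatMap_pow u p hp

lemma getLast?_wordPow (r : List A) (p : ℕ) (hp : 1 ≤ p) (hr : r ≠ []) :
    (wordPow r p).getLast? = r.getLast? := by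
  obtain ⟨q, rfl⟩ : ∃ q, p = q + 1 := ⟨p - 1, by omega⟩
  rw [wordPow_succ', List.getLast?_append, List.getLast?_eq_getLast hr]
  rfl

lemma bwt_wordPow (u : List A) (p : ℕ) (hp : 1 ≤ p) :
    bwt (wordPow u p) = (bwt u).flatMap (fun b => List.replicate p b) := by
  by_cases hu : u = []
  · subst hu
    have h1 : wordPow ([] : List A) p = [] := by simp [wordPow]
    rw [h1]
    have h2 : bwt ([] : List A) = [] := by simp [bwt, bwtBy, rotations]
    rw [h2]
    rfl
  · have a0 : A := u.head hu
    have hne : ∀ r ∈ (rotations u).mergeSort (lexLe stdLt), r ≠ [] := by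
      intro r hr hnil
      have := length_of_mem_rotations (List.mem_mergeSort.mp hr)
      rw [hnil] at this
      exact hu (List.eq_nil_of_length_eq_zero this.symm)
    have hpow : wordPow u p ≠ [] := by
      intro h
      have hlen := length_wordPow u p
      rw [h, List.length_nil] at hlen
      have hul : 0 < u.length := List.length_pos_iff.mpr hu
      have : 0 < p * u.length := Nat.mul_pos hp hul
      omega
    rw [bwt_eq_map (wordPow u p) hpow a0, bwt_eq_map u hu a0,
      mergeSort_rotations_wordPow u p hp]
    rw [List.map_flatMap, List.flatMap_map]
    apply List.flatMap_congr
    intro r hr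
    simp only [List.map_replicate, Function.comp]
    rw [getLast?_wordPow r p hp (hne r hr)]

lemma rotate_concat (s : List A) (a : A) :
    (s ++ [a]).rotate ((s ++ [a]).length - 1) = a :: s := by
  have h : (s ++ [a]).length - 1 = s.length := by simp
  rw [h, List.rotate_eq_drop_append_take (by simp), List.drop_left, List.take_left]
  rfl

lemma rotate_length_sub_one (r : List A) (hr : r ≠ []) (a0 : A) :
    r.rotate (r.length - 1) = r.getLast?.getD a0 :: r.dropLast := by
  conv_lhs => rw [← List.dropLast_append_getLast hr]
  rw [rotate_concat, List.getLast?_eq_getLast hr]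
  rfl

def recon (L : List A) : ℕ → List (List A)
  | 0 => List.replicate L.length []
  | k + 1 => List.zipWith (· :: ·) L ((recon L k).mergeSort (lexLe stdLt))

lemma recon_perm (w : List A) (hw : w ≠ []) :
    ∀ k, k ≤ w.length → (recon (bwt w) k).Perm ((rotations w).map (List.take k))
  | 0, _ => by
    have h : List.map (List.take 0) (rotations w) = List.replicate (rotations w).length [] :=
      (List.map_congr_left fun r _ => rfl).trans (List.map_const' (b := ([] : List A)))
    rw [h, length_rotations]
    show (List.replicate (bwt w).length []).Perm _
    rw [length_bwt]
  | k + 1, hk => by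
    have hMperm : ((rotations w).mergeSort (lexLe stdLt)).Perm (rotations w) :=
      List.mergeSort_perm _ _
    set M := (rotations w).mergeSort (lexLe stdLt) with hM
    have hMlen : ∀ r ∈ M, r.length = w.length := fun r hr =>
      length_of_mem_rotations (hMperm.mem_iff.mp hr)
    have hMne : ∀ r ∈ M, r ≠ [] := by
      intro r hr hnil
      have := hMlen r hr
      rw [hnil] at this
      exact hw (List.eq_nil_of_length_eq_zero this.symm)
    have a0 : A := w.head hw
    have hstep1 : (recon (bwt w) k).mergeSort (lexLe stdLt) = M.map (List.take k) := by
      apply eq_of_perm_of_lexSorted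
      · exact (List.mergeSort_perm _ _).trans ((recon_perm w hw k (by omega)).trans
          (hMperm.map _).symm)
      · exact sorted_mergeSort_lex _
      · rw [List.pairwise_map]
        exact (sorted_mergeSort_lex (rotations w)).imp (fun h => lexLe_take k h)
    have hL : bwt w = M.map (fun r => r.getLast?.getD a0) := bwt_eq_map w hw a0
    show (List.zipWith (· :: ·) (bwt w) ((recon (bwt w) k).mergeSort (lexLe stdLt))).Perm _
    rw [hstep1, hL, List.zipWith_map, List.zipWith_self]
    have hmc : M.map (fun r => r.getLast?.getD a0 :: r.take k)
        = M.map (fun r => (r.rotate (w.length - 1)).take (k + 1)) := by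
      apply List.map_congr_left
      intro r hr
      have hkr : k ≤ r.length - 1 := by rw [hMlen r hr]; omega
      symm
      rw [← hMlen r hr, rotate_length_sub_one r (hMne r hr) a0, List.take_succ_cons,
        List.dropLast_eq_take, List.take_take, Nat.min_eq_left hkr]
    rw [hmc]
    have hmm : M.map (fun r => (r.rotate (w.length - 1)).take (k + 1))
        = (M.map (fun r => r.rotate (w.length - 1))).map (List.take (k + 1)) := by
      rw [List.map_map]; rfl
    rw [hmm]
    have hrot : (M.map (fun r => r.rotate (w.length - 1))).Perm (rotations w) := by
      refine (hMperm.map _).trans ?_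
      have heq : (rotations w).map (fun r => r.rotate (w.length - 1))
          = rotations (w.rotate (w.length - 1)) := by
        simp only [rotations, List.map_map, List.length_rotate]
        apply List.map_congr_left
        intro i _
        simp only [Function.comp, List.rotate_rotate]
        rw [Nat.add_comm]
      rw [heq]
      exact rotations_rotate w (w.length - 1)
    exact hrot.map (List.take (k + 1))

lemma rotations_perm_of_bwt_eq {w w' : List A} (hw : w ≠ []) (hw' : w' ≠ [])
    (h : bwt w = bwt w') : (rotations w).Perm (rotations w') := by
  have hlen : w.length = w'.length := by rw [← length_bwt w, h, length_bwt]
  have htake : ∀ v : List A, (rotations v).map (List.take v.length) = rotations v := by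
    intro v
    conv_rhs => rw [← List.map_id (rotations v)]
    apply List.map_congr_left
    intro r hr
    rw [← length_of_mem_rotations hr, List.take_length, id]
  have h1 := recon_perm w hw w.length le_rfl
  have h2 := recon_perm w' hw' w'.length le_rfl
  rw [htake w] at h1
  rw [htake w'] at h2
  rw [h, hlen] at h1
  exact h1.symm.trans h2

end Aux

/-- `w` is a conjugate of `u^p` iff, writing `BWT(u) = b₁ ⋯ b_n`,
`BWT(w) = b₁^p ⋯ b_n^p`. -/
theorem conjugate_pow_iff_bwt [LinearOrder A] (u w : List A) (p : ℕ) (hp : 1 ≤ p) :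
    Conjugate w (wordPow u p) ↔ bwt w = (bwt u).flatMap (fun b => List.replicate p b) := by
  rw [← bwt_wordPow u p hp]
  by_cases hu : u = []
  · subst hu
    have h1 : wordPow ([] : List A) p = [] := by simp [wordPow]
    rw [h1]
    constructor
    · rintro ⟨x, y, rfl, hxy⟩
      obtain ⟨hx, hy⟩ := List.append_eq_nil_iff.mp hxy.symm
      subst hx; subst hy; rfl
    · intro h
      have hlw : w.length = 0 := by rw [← length_bwt w, h, length_bwt]; rfl
      have hwnil : w = [] := List.eq_nil_of_length_eq_zero hlw
      subst hwnil; exact ⟨[], [], rfl, rfl⟩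
  · have hul : 0 < u.length := List.length_pos_iff.mpr hu
    have hpow : wordPow u p ≠ [] := by
      intro h
      have hlen := length_wordPow u p
      rw [h, List.length_nil] at hlen
      have := Nat.mul_pos hp hul
      omega
    constructor
    · intro hc
      obtain ⟨i, hi⟩ := conjugate_iff_rotate.mp hc
      apply bwt_eq_of_rotations_perm
      rw [hi]
      exact (rotations_rotate w i).symm
    · intro hb
      have hw : w ≠ [] := by
        intro h
        subst h
        have h1 : (0 : ℕ) = (wordPow u p).length := by
          rw [← length_bwt, ← hb, length_bwt]; rfl
        rw [length_wordPow] at h1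
        have := Nat.mul_pos hp hul
        omega
      have hperm := rotations_perm_of_bwt_eq hw hpow hb
      have hmem : wordPow u p ∈ rotations w :=
        hperm.mem_iff.mpr (self_mem_rotations _ hpow)
      obtain ⟨i, hi⟩ := exists_of_mem_rotations hmem
      exact conjugate_iff_rotate.mpr ⟨i, hi⟩

end BWTpaper
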